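/- (Purification of representable densities.) For every positive integer k, the k-convex hull of the set of pure-state representable densities of the original theory equals the set of pure-state representable densities of the k-convexified theory: conv_k(ι*(P)) = ῑ*(P̄). In particular, for k = dim H, the set of ensemble-state representable densities ι*(E) of the original theory equals the set of pure-state representable densities of the convexified theory. -/

import Mathlib

open Filter Topology

noncomputable section

variable {V H : Type*}
  [AddCommGroup V] [Module ℝ V]
  [NormedAddCommGroup H] [InnerProductSpace ℂ H]

/-- The real expectation value `⟨ψ, T ψ⟩` of an operator `T` in the vector `ψ`. -/
def expectation (T : H →ₗ[ℂ] H) (ψ : H) : ℝ := (inner ℂ ψ (T ψ) : ℂ).re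

/-- The ground state energy of the Hamiltonian `ι v + W`. -/
def energy (ι : V →ₗ[ℝ] (H →ₗ[ℂ] H)) (W : H →ₗ[ℂ] H) (v : V) : ℝ :=
  sInf {r : ℝ | ∃ ψ : H, ‖ψ‖ = 1 ∧ r = expectation (ι v + W) ψ}

/-- The density `ι*(|ψ⟩⟨ψ|)` of the pure state given by the unit vector `ψ`,
as an element of the dual space `V*`. -/
def pureDensity (ι : V →ₗ[ℝ] (H →ₗ[ℂ] H)) (ψ : H) : Module.Dual ℝ V where
  toFun v := expectation (ι v) ψ
  map_add' v w := by simp [expectation, inner_add_right]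
  map_smul' c v := by
    simp only [map_smul, LinearMap.smul_apply, expectation, RingHom.id_apply, smul_eq_mul]
    rw [← algebraMap_smul ℂ c ((ι v) ψ), Complex.coe_algebraMap, inner_smul_right]
    simp

/-- An ensemble state: a positive semidefinite operator of unit trace. -/
def IsEnsembleState (Γ : H →ₗ[ℂ] H) : Prop :=
  Γ.IsSymmetric ∧ (∀ x : H, 0 ≤ (inner ℂ x (Γ x) : ℂ).re) ∧ LinearMap.trace ℂ H Γ = 1

/-- The density `ι*(Γ)` of a state `Γ`, `v ↦ Tr(Γ ι(v))`, as an element of `V*`. -/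
def traceDensity (ι : V →ₗ[ℝ] (H →ₗ[ℂ] H)) (Γ : H →ₗ[ℂ] H) : Module.Dual ℝ V where
  toFun v := (LinearMap.trace ℂ H (ι v ∘ₗ Γ)).re
  map_add' v w := by simp [map_add, LinearMap.add_comp]
  map_smul' c v := by
    simp only [map_smul, RingHom.id_apply, smul_eq_mul]
    rw [← algebraMap_smul ℂ c (ι v), LinearMap.smul_comp, map_smul, Complex.coe_algebraMap]
    simp

/-- The pure (Levy–Lieb) universal functional `F_p`. -/
def Fp (ι : V →ₗ[ℝ] (H →ₗ[ℂ] H)) (W : H →ₗ[ℂ] H) (ρ : Module.Dual ℝ V) : ℝ :=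
  sInf {r : ℝ | ∃ ψ : H, ‖ψ‖ = 1 ∧ pureDensity ι ψ = ρ ∧ r = expectation W ψ}

/-- The ensemble (Lieb/Valone) universal functional `F_e`. -/
def Fe (ι : V →ₗ[ℝ] (H →ₗ[ℂ] H)) (W : H →ₗ[ℂ] H) (ρ : Module.Dual ℝ V) : ℝ :=
  sInf {r : ℝ | ∃ Γ : H →ₗ[ℂ] H, IsEnsembleState Γ ∧ traceDensity ι Γ = ρ ∧
    r = (LinearMap.trace ℂ H (W ∘ₗ Γ)).re}

/-- The weight space of a functional `α ∈ V*`. -/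
def weightSpace (ι : V →ₗ[ℝ] (H →ₗ[ℂ] H)) (α : Module.Dual ℝ V) : Submodule ℂ H where
  carrier := {ψ : H | ∀ v : V, ι v ψ = (α v : ℂ) • ψ}
  add_mem' := by
    intro a b ha hb v
    rw [map_add, ha v, hb v, smul_add]
  zero_mem' := by intro v; simp
  smul_mem' := by
    intro c x hx v
    rw [LinearMap.map_smul, hx v, smul_comm]

/-- The set of weights of an abelian functional theory. -/
def weights (ι : V →ₗ[ℝ] (H →ₗ[ℂ] H)) : Set (Module.Dual ℝ V) :=
  {α : Module.Dual ℝ V | weightSpace ι α ≠ ⊥}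

/-- The derivative of the density map along the set of pure states at `|Ψ⟩⟨Ψ|`,
applied to the tangent vector `φ ⊥ Ψ`: the functional `v ↦ 2 Re⟨φ, ι(v)Ψ⟩`. -/
def derivDensity (ι : V →ₗ[ℝ] (H →ₗ[ℂ] H)) (Ψ φ : H) : Module.Dual ℝ V where
  toFun v := 2 * (inner ℂ φ (ι v Ψ) : ℂ).re
  map_add' v w := by simp [inner_add_right]; ring
  map_smul' c v := by
    simp only [map_smul, LinearMap.smul_apply, RingHom.id_apply, smul_eq_mul]
    rw [← algebraMap_smul ℂ c ((ι v) Ψ), Complex.coe_algebraMap, inner_smul_right]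
    simp; ring

/-- `ρ` is a relative interior point of the convex set `C` (i.e. an interior point
of `C` within its affine span): every point of `C` lies on a segment inside `C`
having `ρ` in its (open) interior. -/
def IsRelInterior {M : Type*} [AddCommGroup M] [Module ℝ M] (C : Set M) (ρ : M) : Prop :=
  ρ ∈ C ∧ ∀ σ ∈ C, ∃ τ ∈ C, ∃ t : ℝ, 0 < t ∧ t < 1 ∧ ρ = t • σ + (1 - t) • τ

/-- Strong orthogonality: componentwise orthogonality in every weight space. -/
def StronglyOrthogonal [FiniteDimensional ℂ H] (ι : V →ₗ[ℝ] (H →ₗ[ℂ] H)) (Φ Φ' : H) : Prop :=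
  ∀ α : Module.Dual ℝ V, weightSpace ι α ≠ ⊥ →
    (inner ℂ (Submodule.orthogonalProjection (weightSpace ι α) Φ)
        (Submodule.orthogonalProjection (weightSpace ι α) Φ') : ℂ) = 0

/-- The `k`-convex hull of a set. -/
def convk {M : Type*} [AddCommGroup M] [Module ℝ M] (k : ℕ) (X : Set M) : Set M :=
  {ρ : M | ∃ (t : Fin k → ℝ) (x : Fin k → M),
    (∀ i, 0 ≤ t i) ∧ (∑ i, t i) = 1 ∧ (∀ i, x i ∈ X) ∧ (∑ i, t i • x i) = ρ}

/-- The operator `A ⊗ id` on `H ⊗ ℂᵏ ≅ H ⊕ ⋯ ⊕ H` (k summands). -/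
def opBar (k : ℕ) (A : H →ₗ[ℂ] H) :
    (PiLp 2 fun _ : Fin k => H) →ₗ[ℂ] (PiLp 2 fun _ : Fin k => H) where
  toFun x := WithLp.toLp 2 (fun i => A (x i))
  map_add' x y := by ext i; simp [PiLp.add_apply]
  map_smul' c x := by ext i; simp [PiLp.smul_apply]

/-- The potential map `v ↦ ι(v) ⊗ id` of the `k`-convexified functional theory. -/
def potBar (k : ℕ) (ι : V →ₗ[ℝ] (H →ₗ[ℂ] H)) :
    V →ₗ[ℝ] ((PiLp 2 fun _ : Fin k => H) →ₗ[ℂ] (PiLp 2 fun _ : Fin k => H)) where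
  toFun v := opBar k (ι v)
  map_add' v w := by
    apply LinearMap.ext; intro x; ext i
    simp [opBar, map_add]
  map_smul' c v := by
    apply LinearMap.ext; intro x; ext i
    simp [opBar, map_smul]

/-- The subspace of potentials mapped to real multiples of the identity operator. -/
def scalarPart (ι : V →ₗ[ℝ] (H →ₗ[ℂ] H)) : Submodule ℝ V where
  carrier := {v : V | ∃ c : ℝ, ι v = c • (LinearMap.id : H →ₗ[ℂ] H)}
  add_mem' := by
    rintro a b ⟨c, hc⟩ ⟨d, hd⟩
    exact ⟨c + d, by rw [map_add, hc, hd, add_smul]⟩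
  zero_mem' := ⟨0, by simp⟩
  smul_mem' := by
    rintro a v ⟨c, hc⟩
    exact ⟨a * c, by rw [map_smul, hc, smul_smul]⟩

section Aux

lemma pureDensity_apply' (ι : V →ₗ[ℝ] (H →ₗ[ℂ] H)) (ψ : H) (v : V) :
    pureDensity ι ψ v = (inner ℂ ψ (ι v ψ) : ℂ).re := rfl

lemma traceDensity_apply' (ι : V →ₗ[ℝ] (H →ₗ[ℂ] H)) (Γ : H →ₗ[ℂ] H) (v : V) :
    traceDensity ι Γ v = (LinearMap.trace ℂ H (ι v ∘ₗ Γ)).re := rfl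

lemma pureDensity_zero' (ι : V →ₗ[ℝ] (H →ₗ[ℂ] H)) : pureDensity ι (0 : H) = 0 := by
  apply LinearMap.ext; intro v
  simp [pureDensity_apply']

lemma pureDensity_real_smul (ι : V →ₗ[ℝ] (H →ₗ[ℂ] H)) (c : ℝ) (ψ : H) :
    pureDensity ι ((c : ℂ) • ψ) = (c ^ 2) • pureDensity ι ψ := by
  apply LinearMap.ext; intro v
  simp only [pureDensity_apply', LinearMap.smul_apply, smul_eq_mul, map_smul]
  rw [inner_smul_left, inner_smul_right, Complex.conj_ofReal, ← mul_assoc,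
    ← Complex.ofReal_mul, Complex.re_ofReal_mul]
  ring

lemma pureDensity_potBar (ι : V →ₗ[ℝ] (H →ₗ[ℂ] H)) (k : ℕ)
    (Ψ : PiLp 2 fun _ : Fin k => H) :
    pureDensity (potBar k ι) Ψ = ∑ i, pureDensity ι (Ψ i) := by
  apply LinearMap.ext; intro v
  have h1 : (inner ℂ Ψ ((potBar k ι v) Ψ) : ℂ) = ∑ i, (inner ℂ (Ψ i) (ι v (Ψ i)) : ℂ) := by
    rw [PiLp.inner_apply]; rfl
  simp only [LinearMap.coe_sum, Finset.sum_apply, pureDensity_apply', h1, Complex.re_sum]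

variable [FiniteDimensional ℂ H]

lemma trace_eq_sum_inner'' {n : ℕ} (b : OrthonormalBasis (Fin n) ℂ H) (T : H →ₗ[ℂ] H) :
    LinearMap.trace ℂ H T = ∑ i, (inner ℂ (b i) (T (b i)) : ℂ) := by
  rw [LinearMap.trace_eq_matrix_trace ℂ b.toBasis, Matrix.trace]
  refine Finset.sum_congr rfl fun i _ => ?_
  rw [Matrix.diag_apply, LinearMap.toMatrix_apply, b.coe_toBasis_repr_apply,
    b.repr_apply_apply, OrthonormalBasis.coe_toBasis]

/-- The rank-one operator `|ψ⟩⟨ψ|`. -/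
def rk1 (ψ : H) : H →ₗ[ℂ] H where
  toFun x := (inner ℂ ψ x : ℂ) • ψ
  map_add' x y := by simp [inner_add_right, add_smul]
  map_smul' c x := by simp [inner_smul_right, smul_smul]

lemma rk1_apply (ψ x : H) : rk1 ψ x = (inner ℂ ψ x : ℂ) • ψ := rfl

lemma trace_comp_rk1 (T : H →ₗ[ℂ] H) (ψ : H) :
    LinearMap.trace ℂ H (T ∘ₗ rk1 ψ) = (inner ℂ ψ (T ψ) : ℂ) := by
  rw [trace_eq_sum_inner'' (stdOrthonormalBasis ℂ H)]
  have h : ∀ j, (inner ℂ (stdOrthonormalBasis ℂ H j)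
        ((T ∘ₗ rk1 ψ) (stdOrthonormalBasis ℂ H j)) : ℂ)
      = inner ℂ ψ (stdOrthonormalBasis ℂ H j) * inner ℂ (stdOrthonormalBasis ℂ H j) (T ψ) := by
    intro j
    rw [LinearMap.comp_apply, rk1_apply, map_smul, inner_smul_right]
  simp_rw [h]
  exact (stdOrthonormalBasis ℂ H).sum_inner_mul_inner ψ (T ψ)

end Aux

/-- purification of representable densities. -/
theorem purification_representability [FiniteDimensional ℝ V] [FiniteDimensional ℂ H]
    [Nontrivial H]
    (ι : V →ₗ[ℝ] (H →ₗ[ℂ] H)) (W : H →ₗ[ℂ] H)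
    (hι : ∀ v : V, (ι v).IsSymmetric) (hW : W.IsSymmetric) :
    (∀ k : ℕ, 0 < k →
      convk k {σ : Module.Dual ℝ V | ∃ ψ : H, ‖ψ‖ = 1 ∧ pureDensity ι ψ = σ}
        = {σ : Module.Dual ℝ V |
            ∃ Ψ : PiLp 2 fun _ : Fin k => H, ‖Ψ‖ = 1 ∧ pureDensity (potBar k ι) Ψ = σ}) ∧
    ({σ : Module.Dual ℝ V | ∃ Γ : H →ₗ[ℂ] H, IsEnsembleState Γ ∧ traceDensity ι Γ = σ}
      = {σ : Module.Dual ℝ V |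
          ∃ Ψ : PiLp 2 fun _ : Fin (Module.finrank ℂ H) => H, ‖Ψ‖ = 1 ∧
            pureDensity (potBar (Module.finrank ℂ H) ι) Ψ = σ}) := by
  classical
  have npos : 0 < Module.finrank ℂ H := Module.finrank_pos
  obtain ⟨x0, hx0⟩ := exists_ne (0 : H)
  have hx0n : ‖x0‖ ≠ 0 := norm_ne_zero_iff.mpr hx0
  set e : H := ((‖x0‖⁻¹ : ℝ) : ℂ) • x0 with he
  have he1 : ‖e‖ = 1 := by
    rw [he, norm_smul, Complex.norm_real, Real.norm_eq_abs, abs_of_nonneg (by positivity)]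
    field_simp
  have part1 : ∀ k : ℕ, 0 < k →
      convk k {σ : Module.Dual ℝ V | ∃ ψ : H, ‖ψ‖ = 1 ∧ pureDensity ι ψ = σ}
        = {σ : Module.Dual ℝ V |
            ∃ Ψ : PiLp 2 fun _ : Fin k => H, ‖Ψ‖ = 1 ∧ pureDensity (potBar k ι) Ψ = σ} := by
    intro k hk
    ext σ
    constructor
    · rintro ⟨t, x, ht, hsum, hx, hrep⟩
      choose ψ hψn hψd using hx
      set Ψ : PiLp 2 fun _ : Fin k => H := WithLp.toLp 2 (fun i => ((Real.sqrt (t i) : ℝ) : ℂ) • ψ i) with hΨ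
      have hnormsq : ‖Ψ‖ ^ 2 = 1 := by
        rw [PiLp.norm_sq_eq_of_L2]
        have : ∀ i, ‖Ψ i‖ ^ 2 = t i := by
          intro i
          rw [hΨ, PiLp.toLp_apply, norm_smul, Complex.norm_real, Real.norm_eq_abs, abs_of_nonneg (Real.sqrt_nonneg _), hψn i,
            mul_one, Real.sq_sqrt (ht i)]
        simp_rw [this]; exact hsum
      refine ⟨Ψ, by nlinarith [norm_nonneg Ψ], ?_⟩
      rw [pureDensity_potBar, ← hrep]
      refine Finset.sum_congr rfl fun i _ => ?_
      rw [hΨ, PiLp.toLp_apply, pureDensity_real_smul, Real.sq_sqrt (ht i), hψd i]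
    · rintro ⟨Ψ, hΨ, hrep⟩
      refine ⟨fun i => ‖Ψ i‖ ^ 2,
        fun i => if h : Ψ i = 0 then pureDensity ι e
          else pureDensity ι (((‖Ψ i‖⁻¹ : ℝ) : ℂ) • Ψ i),
        fun i => sq_nonneg _, ?_, ?_, ?_⟩
      · rw [← PiLp.norm_sq_eq_of_L2, hΨ, one_pow]
      · intro i
        by_cases h : Ψ i = 0
        · simp only [dif_pos h]; exact ⟨e, he1, rfl⟩
        · simp only [dif_neg h]
          refine ⟨_, ?_, rfl⟩
          rw [norm_smul, Complex.norm_real, Real.norm_eq_abs, abs_of_nonneg (by positivity)]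
          exact inv_mul_cancel₀ (norm_ne_zero_iff.mpr h)
      · rw [← hrep, pureDensity_potBar]
        refine Finset.sum_congr rfl fun i _ => ?_
        by_cases h : Ψ i = 0
        · simp only [dif_pos h, h, pureDensity_zero', norm_zero]
          simp
        · simp only [dif_neg h]; rw [pureDensity_real_smul, smul_smul]
          have hn : ‖Ψ i‖ ≠ 0 := norm_ne_zero_iff.mpr h
          rw [show ‖Ψ i‖ ^ 2 * (‖Ψ i‖⁻¹) ^ 2 = 1 by field_simp, one_smul]
  refine ⟨part1, ?_⟩
  rw [← part1 _ npos]
  ext σ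
  constructor
  · rintro ⟨Γ, ⟨hsym, hpos, htr⟩, hrep⟩
    let b := hsym.eigenvectorBasis rfl
    let μ := hsym.eigenvalues rfl
    have happly : ∀ i, Γ (b i) = (μ i : ℂ) • b i := hsym.apply_eigenvectorBasis rfl
    have hbn : ∀ i, ‖b i‖ = 1 := b.orthonormal.1
    have hinner : ∀ i, (inner ℂ (b i) (b i) : ℂ) = 1 := by
      intro i; rw [inner_self_eq_norm_sq_to_K, hbn i]; simp
    have hμ0 : ∀ i, 0 ≤ μ i := by
      intro i
      have h1 := hpos (b i)
      rwa [happly, inner_smul_right, hinner, mul_one, Complex.ofReal_re] at h1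
    have hμsum : ∑ i, μ i = 1 := by
      have h2 : ((∑ i, μ i : ℝ) : ℂ) = 1 := by
        rw [Complex.ofReal_sum, ← htr, trace_eq_sum_inner'' b]
        refine Finset.sum_congr rfl fun i _ => ?_
        rw [happly, inner_smul_right, hinner, mul_one]
      exact_mod_cast h2
    refine ⟨μ, fun i => pureDensity ι (b i), hμ0, hμsum,
      fun i => ⟨b i, hbn i, rfl⟩, ?_⟩
    rw [← hrep]
    apply LinearMap.ext; intro v
    have htr2 : LinearMap.trace ℂ H (ι v ∘ₗ Γ) = ∑ i, (μ i : ℂ) * inner ℂ (b i) (ι v (b i)) := by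
      rw [trace_eq_sum_inner'' b]
      refine Finset.sum_congr rfl fun i _ => ?_
      rw [LinearMap.comp_apply, happly, map_smul, inner_smul_right]
    rw [traceDensity_apply', htr2, Complex.re_sum]
    simp only [LinearMap.coe_sum, Finset.sum_apply, LinearMap.smul_apply, pureDensity_apply',
      smul_eq_mul, Complex.re_ofReal_mul]
  · rintro ⟨t, x, ht, hsum, hx, hrep⟩
    choose ψ hψn hψd using hx
    have hinner1 : ∀ i, (inner ℂ (ψ i) (ψ i) : ℂ) = 1 := by
      intro i; rw [inner_self_eq_norm_sq_to_K, hψn i]; simp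
    set Γ : H →ₗ[ℂ] H := ∑ i, (t i : ℂ) • rk1 (ψ i) with hΓ
    have hΓapp : ∀ a : H, Γ a = ∑ i, (t i : ℂ) • ((inner ℂ (ψ i) a : ℂ) • ψ i) := by
      intro a
      rw [hΓ]
      simp only [LinearMap.coe_sum, Finset.sum_apply, LinearMap.smul_apply, rk1_apply]
    have hcomp : ∀ T : H →ₗ[ℂ] H, T ∘ₗ Γ = ∑ i, (t i : ℂ) • (T ∘ₗ rk1 (ψ i)) := by
      intro T
      apply LinearMap.ext; intro a
      simp only [LinearMap.comp_apply, hΓapp, map_sum, map_smul, LinearMap.coe_sum,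
        Finset.sum_apply, LinearMap.smul_apply, rk1_apply]
    have htrace : ∀ T : H →ₗ[ℂ] H,
        LinearMap.trace ℂ H (T ∘ₗ Γ) = ∑ i, (t i : ℂ) * inner ℂ (ψ i) (T (ψ i)) := by
      intro T
      rw [hcomp T, map_sum]
      refine Finset.sum_congr rfl fun i _ => ?_
      rw [map_smul, trace_comp_rk1, smul_eq_mul]
    refine ⟨Γ, ⟨?_, ?_, ?_⟩, ?_⟩
    · intro a c
      rw [hΓapp, hΓapp, sum_inner, inner_sum]
      refine Finset.sum_congr rfl fun i _ => ?_
      rw [inner_smul_left, inner_smul_left, inner_smul_right, inner_smul_right,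
        Complex.conj_ofReal, inner_conj_symm]
      ring
    · intro a
      have h3 : (inner ℂ a (Γ a) : ℂ) = ∑ i, (t i : ℂ) * ((Complex.normSq (inner ℂ (ψ i) a : ℂ) : ℝ) : ℂ) := by
        rw [hΓapp, inner_sum]
        refine Finset.sum_congr rfl fun i _ => ?_
        rw [inner_smul_right, inner_smul_right, ← inner_conj_symm a (ψ i), Complex.mul_conj]
      rw [h3, Complex.re_sum]
      refine Finset.sum_nonneg fun i _ => ?_
      rw [← Complex.ofReal_mul, Complex.ofReal_re]
      exact mul_nonneg (ht i) (Complex.normSq_nonneg _)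
    · have h4 : LinearMap.trace ℂ H Γ = ∑ i, (t i : ℂ) * inner ℂ (ψ i) (ψ i) := by
        have := htrace LinearMap.id
        rwa [LinearMap.id_comp] at this
      rw [h4]
      simp_rw [hinner1, mul_one]
      rw [← Complex.ofReal_sum, hsum, Complex.ofReal_one]
    · rw [← hrep]
      apply LinearMap.ext; intro v
      rw [traceDensity_apply', htrace (ι v), Complex.re_sum]
      simp only [LinearMap.coe_sum, Finset.sum_apply, LinearMap.smul_apply,
        Complex.re_ofReal_mul, smul_eq_mul]
      refine Finset.sum_congr rfl fun i _ => ?_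
      rw [← hψd i, pureDensity_apply']

end
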